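/- There exists a finite point set P such that the uniform 2D-monotone spanning graph of P of minimum cost and the uniform 2D-monotone spanning graph of P with the fewest edges are attained at different rotation angles and are different graphs. -/

import Mathlib

open scoped BigOperators

noncomputable section

/-- A point in the Euclidean plane. -/
abbrev Pt : Type := EuclideanSpace ℝ (Fin 2)

noncomputable instance : DecidableEq Pt := Classical.decEq _

/-- A real sequence is monotone (increasing or decreasing) on indices `0..t`. -/
def MonoTo (f : ℕ → ℝ) (t : ℕ) : Prop :=
  (∀ i j : ℕ, i ≤ j → j ≤ t → f i ≤ f j) ∨ (∀ i j : ℕ, i ≤ j → j ≤ t → f j ≤ f i)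

/-- A point sequence is `y`-monotone on indices `0..t`. -/
def YMono (q : ℕ → Pt) (t : ℕ) : Prop := MonoTo (fun i => q i 1) t

/-- A point sequence is `xy`-monotone on indices `0..t`. -/
def XYMono (q : ℕ → Pt) (t : ℕ) : Prop :=
  MonoTo (fun i => q i 0) t ∧ MonoTo (fun i => q i 1) t

/-- `E` is the edge set of a geometric graph with vertex set `P` (no loops). -/
def IsGraphOn (P : Finset Pt) (E : Finset (Sym2 Pt)) : Prop :=
  ∀ p q : Pt, s(p, q) ∈ E → p ∈ P ∧ q ∈ P ∧ p ≠ q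

/-- `w 0, …, w t` is a path of `E` from `a` to `b`. -/
def IsPathBetween (E : Finset (Sym2 Pt)) (w : ℕ → Pt) (t : ℕ) (a b : Pt) : Prop :=
  w 0 = a ∧ w t = b ∧ ∀ i : ℕ, i < t → s(w i, w (i + 1)) ∈ E

/-- `a` and `b` are connected by a `y`-monotone path of `E`. -/
def ConnYMono (E : Finset (Sym2 Pt)) (a b : Pt) : Prop :=
  ∃ w t, IsPathBetween E w t a b ∧ YMono w t

/-- `a` and `b` are connected by an `xy`-monotone path of `E`. -/
def ConnXYMono (E : Finset (Sym2 Pt)) (a b : Pt) : Prop :=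
  ∃ w t, IsPathBetween E w t a b ∧ XYMono w t

/-- Cost of a geometric graph: sum of Euclidean lengths of edges. -/
def cost (E : Finset (Sym2 Pt)) : ℝ :=
  ∑ e ∈ E, Sym2.lift ⟨fun p q => dist p q, fun p q => dist_comm p q⟩ e

/-- Closed axis-aligned rectangle with corners `p` and `q`. -/
def Rect (p q : Pt) : Set Pt :=
  {z | min (p 0) (q 0) ≤ z 0 ∧ z 0 ≤ max (p 0) (q 0) ∧
       min (p 1) (q 1) ≤ z 1 ∧ z 1 ≤ max (p 1) (q 1)}

/-- `p` and `q` are rectangularly visible in `P`. -/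
def RectVisible (P : Finset Pt) (p q : Pt) : Prop :=
  ∀ r ∈ P, r ∈ Rect p q → r = p ∨ r = q

/-- Adjacency in the rectangle of influence graph of `P`. -/
def RIGAdj (P : Finset Pt) (a b : Pt) : Prop :=
  a ∈ P ∧ b ∈ P ∧ a ≠ b ∧ RectVisible P a b

/-- A spanning graph on vertex set `V` in which every root in `R` is connected
to every vertex by a `y`-monotone path. -/
def RootedSpan (V R : Finset Pt) (E : Finset (Sym2 Pt)) : Prop :=
  IsGraphOn V E ∧ ∀ r ∈ R, ∀ p ∈ V, ConnYMono E r p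

/-- `E` is a minimum-cost rooted `y`-monotone spanning graph of `V` with roots `R`. -/
def IsMinRooted (V R : Finset Pt) (E : Finset (Sym2 Pt)) : Prop :=
  RootedSpan V R E ∧ ∀ E', RootedSpan V R E' → cost E ≤ cost E'

/-- First rotated coordinate (rotation of axes by angle `θ`). -/
def rotX (θ : ℝ) (z : Pt) : ℝ := Real.cos θ * z 0 + Real.sin θ * z 1

/-- Second rotated coordinate (rotation of axes by angle `θ`). -/
def rotY (θ : ℝ) (z : Pt) : ℝ := -Real.sin θ * z 0 + Real.cos θ * z 1

/-- Closed rectangle with corners `p`, `q` w.r.t. the axes rotated by `θ`. -/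
def RectRot (θ : ℝ) (p q : Pt) : Set Pt :=
  {z | min (rotX θ p) (rotX θ q) ≤ rotX θ z ∧ rotX θ z ≤ max (rotX θ p) (rotX θ q) ∧
       min (rotY θ p) (rotY θ q) ≤ rotY θ z ∧ rotY θ z ≤ max (rotY θ p) (rotY θ q)}

/-- Points of `P` rectangularly visible from `p` w.r.t. the axes rotated by `θ`. -/
def RVrot (θ : ℝ) (P : Finset Pt) (p : Pt) : Set Pt :=
  {q | q ∈ P ∧ q ≠ p ∧ ∀ r ∈ P, r ∈ RectRot θ p q → r = p ∨ r = q}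

/-- Adjacency in the rectangle of influence graph of `P` w.r.t. the axes rotated by `θ`. -/
def RIGrotAdj (θ : ℝ) (P : Finset Pt) (a b : Pt) : Prop :=
  a ∈ P ∧ b ∈ P ∧ a ≠ b ∧ ∀ r ∈ P, r ∈ RectRot θ a b → r = a ∨ r = b

/- ### Auxiliary material -/

/-- Constructor for concrete points. -/
def pt (x y : ℝ) : Pt := WithLp.toLp 2 ![x, y]

lemma rotX_pt (θ x y : ℝ) : rotX θ (pt x y) = Real.cos θ * x + Real.sin θ * y := rfl
lemma rotY_pt (θ x y : ℝ) : rotY θ (pt x y) = -Real.sin θ * x + Real.cos θ * y := rfl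

lemma dist_pt (x1 y1 x2 y2 : ℝ) :
    dist (pt x1 y1) (pt x2 y2) = Real.sqrt ((x1-x2)^2+(y1-y2)^2) := by
  rw [EuclideanSpace.dist_eq, Fin.sum_univ_two]
  simp [pt, Real.dist_eq, sq_abs]

lemma dist_pt_sq (x1 y1 x2 y2 : ℝ) :
    dist (pt x1 y1) (pt x2 y2) ^ 2 = (x1-x2)^2+(y1-y2)^2 := by
  rw [dist_pt, Real.sq_sqrt (by positivity)]

lemma min_max_iff (u v x : ℝ) : (min u v ≤ x ∧ x ≤ max u v) ↔ (x-u)*(x-v) ≤ 0 := by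
  constructor
  · rintro ⟨h1, h2⟩
    rcases le_total u v with h | h
    · rw [min_eq_left h] at h1; rw [max_eq_right h] at h2; nlinarith
    · rw [min_eq_right h] at h1; rw [max_eq_left h] at h2; nlinarith
  · intro hp
    rcases mul_nonpos_iff.mp hp with ⟨h1, h2⟩ | ⟨h1, h2⟩
    · constructor
      · exact le_trans (min_le_left u v) (by linarith)
      · exact le_trans (by linarith) (le_max_right u v)
    · constructor
      · exact le_trans (min_le_right u v) (by linarith)
      · exact le_trans (by linarith) (le_max_left u v)

lemma mem_RectRot_iff {θ : ℝ} {p q z : Pt} : z ∈ RectRot θ p q ↔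
    (rotX θ z - rotX θ p) * (rotX θ z - rotX θ q) ≤ 0 ∧
    (rotY θ z - rotY θ p) * (rotY θ z - rotY θ q) ≤ 0 := by
  constructor
  · rintro ⟨h1, h2, h3, h4⟩
    exact ⟨(min_max_iff _ _ _).mp ⟨h1, h2⟩, (min_max_iff _ _ _).mp ⟨h3, h4⟩⟩
  · rintro ⟨h1, h2⟩
    obtain ⟨a1, a2⟩ := (min_max_iff _ _ _).mpr h1
    obtain ⟨b1, b2⟩ := (min_max_iff _ _ _).mpr h2
    exact ⟨a1, a2, b1, b2⟩

lemma dist_sq_rot (θ : ℝ) (p q : Pt) :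
    (rotX θ p - rotX θ q)^2 + (rotY θ p - rotY θ q)^2 = dist p q ^ 2 := by
  have hcs := Real.sin_sq_add_cos_sq θ
  rw [EuclideanSpace.dist_eq, Real.sq_sqrt (by positivity), Fin.sum_univ_two]
  simp only [rotX, rotY, Real.dist_eq, sq_abs]
  ring_nf
  nlinarith [hcs, sq_nonneg (p 0 - q 0), sq_nonneg (p 1 - q 1)]

lemma blocker_dist {θ : ℝ} {p q z : Pt} (h : z ∈ RectRot θ p q) :
    dist z p ^ 2 ≤ dist p q ^ 2 ∧ dist z q ^ 2 ≤ dist p q ^ 2 := by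
  obtain ⟨h1, h2⟩ := mem_RectRot_iff.mp h
  rw [← dist_sq_rot θ z p, ← dist_sq_rot θ z q, ← dist_sq_rot θ p q]
  constructor <;> nlinarith [h1, h2, sq_nonneg (rotX θ z - rotX θ q), sq_nonneg (rotY θ z - rotY θ q), sq_nonneg (rotX θ z - rotX θ p), sq_nonneg (rotY θ z - rotY θ p)]
/- The five concrete points. -/
def pA : Pt := pt 1 3
def pB : Pt := pt 5 4
def pC : Pt := pt 7 3
def pD : Pt := pt 2 4
def pE : Pt := pt 2 3

lemma pt_ne_of_fst {x1 y1 x2 y2 : ℝ} (h : x1 ≠ x2) : pt x1 y1 ≠ pt x2 y2 := by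
  intro he; exact h (congrArg (fun z : Pt => z 0) he)
lemma pt_ne_of_snd {x1 y1 x2 y2 : ℝ} (h : y1 ≠ y2) : pt x1 y1 ≠ pt x2 y2 := by
  intro he; exact h (congrArg (fun z : Pt => z 1) he)

lemma ne_AB : pA ≠ pB := pt_ne_of_fst (by norm_num)
lemma ne_AC : pA ≠ pC := pt_ne_of_fst (by norm_num)
lemma ne_AD : pA ≠ pD := pt_ne_of_fst (by norm_num)
lemma ne_AE : pA ≠ pE := pt_ne_of_fst (by norm_num)
lemma ne_BC : pB ≠ pC := pt_ne_of_fst (by norm_num)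
lemma ne_BD : pB ≠ pD := pt_ne_of_fst (by norm_num)
lemma ne_BE : pB ≠ pE := pt_ne_of_fst (by norm_num)
lemma ne_CD : pC ≠ pD := pt_ne_of_fst (by norm_num)
lemma ne_CE : pC ≠ pE := pt_ne_of_fst (by norm_num)
lemma ne_DE : pD ≠ pE := pt_ne_of_snd (by norm_num)

/-- The point set. -/
def Pset : Finset Pt := {pA, pB, pC, pD, pE}

lemma mem_Pset {z : Pt} : z ∈ Pset ↔ z = pA ∨ z = pB ∨ z = pC ∨ z = pD ∨ z = pE := by
  simp [Pset]

lemma pA_mem : pA ∈ Pset := mem_Pset.mpr (Or.inl rfl)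
lemma pB_mem : pB ∈ Pset := mem_Pset.mpr (Or.inr (Or.inl rfl))
lemma pC_mem : pC ∈ Pset := mem_Pset.mpr (Or.inr (Or.inr (Or.inl rfl)))
lemma pD_mem : pD ∈ Pset := mem_Pset.mpr (Or.inr (Or.inr (Or.inr (Or.inl rfl))))
lemma pE_mem : pE ∈ Pset := mem_Pset.mpr (Or.inr (Or.inr (Or.inr (Or.inr rfl))))

/-- The minimum-cost RIG (at θ = π/4). -/
def Gmid : Finset (Sym2 Pt) :=
  {s(pA, pD), s(pA, pE), s(pB, pC), s(pB, pD), s(pB, pE), s(pD, pE)}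
/-- The minimum-edge RIG (at θ = 0). -/
def G0 : Finset (Sym2 Pt) :=
  {s(pA, pE), s(pB, pC), s(pB, pD), s(pC, pE), s(pD, pE)}

lemma cost_nonneg_term (e : Sym2 Pt) :
    0 ≤ Sym2.lift ⟨fun p q => dist p q, fun p q => dist_comm p q⟩ e := by
  induction e using Sym2.ind with
  | _ x y => simpa using dist_nonneg

lemma cost_mono {E F : Finset (Sym2 Pt)} (h : E ⊆ F) : cost E ≤ cost F :=
  Finset.sum_le_sum_of_subset_of_nonneg h (fun e _ _ => cost_nonneg_term e)

lemma dAD : dist pA pD = Real.sqrt 2 := by rw [pA, pD, dist_pt]; norm_num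
lemma dAE : dist pA pE = 1 := by rw [pA, pE, dist_pt]; norm_num
lemma dBC : dist pB pC = Real.sqrt 5 := by rw [pB, pC, dist_pt]; norm_num
lemma dBD : dist pB pD = 3 := by
  rw [pB, pD, dist_pt]; norm_num
lemma dBE : dist pB pE = Real.sqrt 10 := by rw [pB, pE, dist_pt]; norm_num
lemma dCE : dist pC pE = 5 := by
  rw [pC, pE, dist_pt]; norm_num
lemma dDE : dist pD pE = 1 := by rw [pD, pE, dist_pt]; norm_num

lemma cost_Gmid : cost Gmid = Real.sqrt 2 + 1 + Real.sqrt 5 + 3 + Real.sqrt 10 + 1 := by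
  have h := fun (x y u v : Pt) => @Sym2.eq_iff Pt x y u v
  rw [Gmid, cost]
  rw [Finset.sum_insert (by simp [h, ne_AB, ne_AC, ne_AD, ne_AE, ne_BC, ne_BD, ne_BE, ne_CD, ne_CE, ne_DE, ne_AB.symm, ne_AC.symm, ne_AD.symm, ne_AE.symm, ne_BC.symm, ne_BD.symm, ne_BE.symm, ne_CD.symm, ne_CE.symm, ne_DE.symm]),
      Finset.sum_insert (by simp [h, ne_AB, ne_AC, ne_AD, ne_AE, ne_BC, ne_BD, ne_BE, ne_CD, ne_CE, ne_DE, ne_AB.symm, ne_AC.symm, ne_AD.symm, ne_AE.symm, ne_BC.symm, ne_BD.symm, ne_BE.symm, ne_CD.symm, ne_CE.symm, ne_DE.symm]),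
      Finset.sum_insert (by simp [h, ne_AB, ne_AC, ne_AD, ne_AE, ne_BC, ne_BD, ne_BE, ne_CD, ne_CE, ne_DE, ne_AB.symm, ne_AC.symm, ne_AD.symm, ne_AE.symm, ne_BC.symm, ne_BD.symm, ne_BE.symm, ne_CD.symm, ne_CE.symm, ne_DE.symm]),
      Finset.sum_insert (by simp [h, ne_AB, ne_AC, ne_AD, ne_AE, ne_BC, ne_BD, ne_BE, ne_CD, ne_CE, ne_DE, ne_AB.symm, ne_AC.symm, ne_AD.symm, ne_AE.symm, ne_BC.symm, ne_BD.symm, ne_BE.symm, ne_CD.symm, ne_CE.symm, ne_DE.symm]),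
      Finset.sum_insert (by simp [h, ne_AB, ne_AC, ne_AD, ne_AE, ne_BC, ne_BD, ne_BE, ne_CD, ne_CE, ne_DE, ne_AB.symm, ne_AC.symm, ne_AD.symm, ne_AE.symm, ne_BC.symm, ne_BD.symm, ne_BE.symm, ne_CD.symm, ne_CE.symm, ne_DE.symm]),
      Finset.sum_singleton]
  simp only [Sym2.lift_mk]
  rw [dAD, dAE, dBC, dBD, dBE, dDE]; ring

lemma cost_G0 : cost G0 = 1 + Real.sqrt 5 + 3 + 5 + 1 := by
  have h := fun (x y u v : Pt) => @Sym2.eq_iff Pt x y u v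
  rw [G0, cost]
  rw [Finset.sum_insert (by simp [h, ne_AB, ne_AC, ne_AD, ne_AE, ne_BC, ne_BD, ne_BE, ne_CD, ne_CE, ne_DE, ne_AB.symm, ne_AC.symm, ne_AD.symm, ne_AE.symm, ne_BC.symm, ne_BD.symm, ne_BE.symm, ne_CD.symm, ne_CE.symm, ne_DE.symm]),
      Finset.sum_insert (by simp [h, ne_AB, ne_AC, ne_AD, ne_AE, ne_BC, ne_BD, ne_BE, ne_CD, ne_CE, ne_DE, ne_AB.symm, ne_AC.symm, ne_AD.symm, ne_AE.symm, ne_BC.symm, ne_BD.symm, ne_BE.symm, ne_CD.symm, ne_CE.symm, ne_DE.symm]),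
      Finset.sum_insert (by simp [h, ne_AB, ne_AC, ne_AD, ne_AE, ne_BC, ne_BD, ne_BE, ne_CD, ne_CE, ne_DE, ne_AB.symm, ne_AC.symm, ne_AD.symm, ne_AE.symm, ne_BC.symm, ne_BD.symm, ne_BE.symm, ne_CD.symm, ne_CE.symm, ne_DE.symm]),
      Finset.sum_insert (by simp [h, ne_AB, ne_AC, ne_AD, ne_AE, ne_BC, ne_BD, ne_BE, ne_CD, ne_CE, ne_DE, ne_AB.symm, ne_AC.symm, ne_AD.symm, ne_AE.symm, ne_BC.symm, ne_BD.symm, ne_BE.symm, ne_CD.symm, ne_CE.symm, ne_DE.symm]),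
      Finset.sum_singleton]
  simp only [Sym2.lift_mk]
  rw [dAE, dBC, dBD, dCE, dDE]; ring

lemma card_Gmid : Gmid.card = 6 := by
  have h := fun (x y u v : Pt) => @Sym2.eq_iff Pt x y u v
  rw [Gmid]
  rw [Finset.card_insert_of_notMem (by simp [h, ne_AB, ne_AC, ne_AD, ne_AE, ne_BC, ne_BD, ne_BE, ne_CD, ne_CE, ne_DE, ne_AB.symm, ne_AC.symm, ne_AD.symm, ne_AE.symm, ne_BC.symm, ne_BD.symm, ne_BE.symm, ne_CD.symm, ne_CE.symm, ne_DE.symm]),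
      Finset.card_insert_of_notMem (by simp [h, ne_AB, ne_AC, ne_AD, ne_AE, ne_BC, ne_BD, ne_BE, ne_CD, ne_CE, ne_DE, ne_AB.symm, ne_AC.symm, ne_AD.symm, ne_AE.symm, ne_BC.symm, ne_BD.symm, ne_BE.symm, ne_CD.symm, ne_CE.symm, ne_DE.symm]),
      Finset.card_insert_of_notMem (by simp [h, ne_AB, ne_AC, ne_AD, ne_AE, ne_BC, ne_BD, ne_BE, ne_CD, ne_CE, ne_DE, ne_AB.symm, ne_AC.symm, ne_AD.symm, ne_AE.symm, ne_BC.symm, ne_BD.symm, ne_BE.symm, ne_CD.symm, ne_CE.symm, ne_DE.symm]),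
      Finset.card_insert_of_notMem (by simp [h, ne_AB, ne_AC, ne_AD, ne_AE, ne_BC, ne_BD, ne_BE, ne_CD, ne_CE, ne_DE, ne_AB.symm, ne_AC.symm, ne_AD.symm, ne_AE.symm, ne_BC.symm, ne_BD.symm, ne_BE.symm, ne_CD.symm, ne_CE.symm, ne_DE.symm]),
      Finset.card_insert_of_notMem (by simp [h, ne_AB, ne_AC, ne_AD, ne_AE, ne_BC, ne_BD, ne_BE, ne_CD, ne_CE, ne_DE, ne_AB.symm, ne_AC.symm, ne_AD.symm, ne_AE.symm, ne_BC.symm, ne_BD.symm, ne_BE.symm, ne_CD.symm, ne_CE.symm, ne_DE.symm]),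
      Finset.card_singleton]

lemma card_G0 : G0.card = 5 := by
  have h := fun (x y u v : Pt) => @Sym2.eq_iff Pt x y u v
  rw [G0]
  rw [Finset.card_insert_of_notMem (by simp [h, ne_AB, ne_AC, ne_AD, ne_AE, ne_BC, ne_BD, ne_BE, ne_CD, ne_CE, ne_DE, ne_AB.symm, ne_AC.symm, ne_AD.symm, ne_AE.symm, ne_BC.symm, ne_BD.symm, ne_BE.symm, ne_CD.symm, ne_CE.symm, ne_DE.symm]),
      Finset.card_insert_of_notMem (by simp [h, ne_AB, ne_AC, ne_AD, ne_AE, ne_BC, ne_BD, ne_BE, ne_CD, ne_CE, ne_DE, ne_AB.symm, ne_AC.symm, ne_AD.symm, ne_AE.symm, ne_BC.symm, ne_BD.symm, ne_BE.symm, ne_CD.symm, ne_CE.symm, ne_DE.symm]),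
      Finset.card_insert_of_notMem (by simp [h, ne_AB, ne_AC, ne_AD, ne_AE, ne_BC, ne_BD, ne_BE, ne_CD, ne_CE, ne_DE, ne_AB.symm, ne_AC.symm, ne_AD.symm, ne_AE.symm, ne_BC.symm, ne_BD.symm, ne_BE.symm, ne_CD.symm, ne_CE.symm, ne_DE.symm]),
      Finset.card_insert_of_notMem (by simp [h, ne_AB, ne_AC, ne_AD, ne_AE, ne_BC, ne_BD, ne_BE, ne_CD, ne_CE, ne_DE, ne_AB.symm, ne_AC.symm, ne_AD.symm, ne_AE.symm, ne_BC.symm, ne_BD.symm, ne_BE.symm, ne_CD.symm, ne_CE.symm, ne_DE.symm]),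
      Finset.card_singleton]
/- The four edges that are present in the RIG for every rotation. -/

lemma adj_AE (θ : ℝ) : RIGrotAdj θ Pset pA pE := by
  refine ⟨pA_mem, pE_mem, ne_AE, ?_⟩
  intro r hr hrect
  rcases mem_Pset.mp hr with rfl | rfl | rfl | rfl | rfl
  · exact Or.inl rfl
  · exfalso; obtain ⟨h1, h2⟩ := blocker_dist hrect
    simp only [pA, pB, pC, pD, pE, dist_pt_sq] at h1 h2; norm_num at h1
  · exfalso; obtain ⟨h1, h2⟩ := blocker_dist hrect
    simp only [pA, pB, pC, pD, pE, dist_pt_sq] at h1 h2; norm_num at h1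
  · exfalso; obtain ⟨h1, h2⟩ := blocker_dist hrect
    simp only [pA, pB, pC, pD, pE, dist_pt_sq] at h1 h2; norm_num at h1
  · exact Or.inr rfl

lemma adj_DE (θ : ℝ) : RIGrotAdj θ Pset pD pE := by
  refine ⟨pD_mem, pE_mem, ne_DE, ?_⟩
  intro r hr hrect
  rcases mem_Pset.mp hr with rfl | rfl | rfl | rfl | rfl
  · exfalso; obtain ⟨h1, h2⟩ := blocker_dist hrect
    simp only [pA, pB, pC, pD, pE, dist_pt_sq] at h1 h2; norm_num at h1
  · exfalso; obtain ⟨h1, h2⟩ := blocker_dist hrect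
    simp only [pA, pB, pC, pD, pE, dist_pt_sq] at h1 h2; norm_num at h1
  · exfalso; obtain ⟨h1, h2⟩ := blocker_dist hrect
    simp only [pA, pB, pC, pD, pE, dist_pt_sq] at h1 h2; norm_num at h1
  · exact Or.inl rfl
  · exact Or.inr rfl

lemma adj_BD (θ : ℝ) : RIGrotAdj θ Pset pB pD := by
  refine ⟨pB_mem, pD_mem, ne_BD, ?_⟩
  intro r hr hrect
  rcases mem_Pset.mp hr with rfl | rfl | rfl | rfl | rfl
  · exfalso; obtain ⟨h1, h2⟩ := blocker_dist hrect
    simp only [pA, pB, pC, pD, pE, dist_pt_sq] at h1 h2; norm_num at h1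
  · exact Or.inl rfl
  · exfalso; obtain ⟨h1, h2⟩ := blocker_dist hrect
    simp only [pA, pB, pC, pD, pE, dist_pt_sq] at h1 h2; norm_num at h1 h2
  · exact Or.inr rfl
  · exfalso; obtain ⟨h1, h2⟩ := blocker_dist hrect
    simp only [pA, pB, pC, pD, pE, dist_pt_sq] at h1 h2; norm_num at h1

lemma adj_BC (θ : ℝ) : RIGrotAdj θ Pset pB pC := by
  refine ⟨pB_mem, pC_mem, ne_BC, ?_⟩
  intro r hr hrect
  rcases mem_Pset.mp hr with rfl | rfl | rfl | rfl | rfl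
  · exfalso; obtain ⟨h1, h2⟩ := blocker_dist hrect
    simp only [pA, pB, pC, pD, pE, dist_pt_sq] at h1 h2; norm_num at h1
  · exact Or.inl rfl
  · exact Or.inr rfl
  · exfalso; obtain ⟨h1, h2⟩ := blocker_dist hrect
    simp only [pA, pB, pC, pD, pE, dist_pt_sq] at h1 h2; norm_num at h1
  · exfalso; obtain ⟨h1, h2⟩ := blocker_dist hrect
    simp only [pA, pB, pC, pD, pE, dist_pt_sq] at h1 h2; norm_num at h1

set_option maxHeartbeats 1600000 in
/-- The key geometric dichotomy: for every rotation, either `pC pE` is an edge of the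
rectangle of influence graph, or both `pA pD` and `pB pE` are. -/
lemma key (θ : ℝ) : RIGrotAdj θ Pset pC pE ∨ (RIGrotAdj θ Pset pA pD ∧ RIGrotAdj θ Pset pB pE) := by
  have hcs : Real.sin θ ^ 2 + Real.cos θ ^ 2 = 1 := Real.sin_sq_add_cos_sq θ
  by_cases hb : pB ∈ RectRot θ pC pE
  · right
    rw [mem_RectRot_iff] at hb
    simp only [pB, pC, pE, rotX_pt, rotY_pt] at hb
    obtain ⟨hb1, hb2⟩ := hb
    have hc0 : Real.cos θ ≠ 0 := by
      intro h; rw [h] at hb1 hcs; nlinarith [hb1, hcs]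
    have hs0 : Real.sin θ ≠ 0 := by
      intro h; rw [h] at hb2 hcs; nlinarith [hb2, hcs]
    have hnb : pB ∉ RectRot θ pA pD ∧ pC ∉ RectRot θ pA pD ∧ pE ∉ RectRot θ pA pD ∧
               pA ∉ RectRot θ pB pE ∧ pC ∉ RectRot θ pB pE ∧ pD ∉ RectRot θ pB pE := by
      rcases hc0.lt_or_gt with h1c | h1c <;> rcases hs0.lt_or_gt with h1s | h1s
      · -- c < 0, s < 0
        have l1 : 2 * Real.cos θ ≤ Real.sin θ := by nlinarith [hb1]
        have l2 : 3 * Real.sin θ ≤ Real.cos θ := by nlinarith [hb2]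
        refine ⟨?_, ?_, ?_, ?_, ?_, ?_⟩ <;>
          (intro hmem; rw [mem_RectRot_iff] at hmem;
           simp only [pA, pB, pC, pD, pE, rotX_pt, rotY_pt] at hmem;
           obtain ⟨u, v⟩ := hmem; nlinarith [u, v, l1, l2, mul_pos_of_neg_of_neg h1c h1s])
      · -- c < 0, 0 < s
        have l1 : Real.sin θ ≤ -3 * Real.cos θ := by nlinarith [hb1]
        have l2 : -Real.cos θ ≤ 2 * Real.sin θ := by nlinarith [hb2]
        refine ⟨?_, ?_, ?_, ?_, ?_, ?_⟩ <;>
          (intro hmem; rw [mem_RectRot_iff] at hmem;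
           simp only [pA, pB, pC, pD, pE, rotX_pt, rotY_pt] at hmem;
           obtain ⟨u, v⟩ := hmem; nlinarith [u, v, l1, l2, mul_neg_of_neg_of_pos h1c h1s])
      · -- 0 < c, s < 0
        have l1 : -3 * Real.cos θ ≤ Real.sin θ := by nlinarith [hb1]
        have l2 : 2 * Real.sin θ ≤ -Real.cos θ := by nlinarith [hb2]
        refine ⟨?_, ?_, ?_, ?_, ?_, ?_⟩ <;>
          (intro hmem; rw [mem_RectRot_iff] at hmem;
           simp only [pA, pB, pC, pD, pE, rotX_pt, rotY_pt] at hmem;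
           obtain ⟨u, v⟩ := hmem; nlinarith [u, v, l1, l2, mul_neg_of_pos_of_neg h1c h1s])
      · -- 0 < c, 0 < s
        have l1 : Real.sin θ ≤ 2 * Real.cos θ := by nlinarith [hb1]
        have l2 : Real.cos θ ≤ 3 * Real.sin θ := by nlinarith [hb2]
        refine ⟨?_, ?_, ?_, ?_, ?_, ?_⟩ <;>
          (intro hmem; rw [mem_RectRot_iff] at hmem;
           simp only [pA, pB, pC, pD, pE, rotX_pt, rotY_pt] at hmem;
           obtain ⟨u, v⟩ := hmem; nlinarith [u, v, l1, l2, mul_pos h1c h1s])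
    obtain ⟨n1, n2, n3, n4, n5, n6⟩ := hnb
    constructor
    · refine ⟨pA_mem, pD_mem, ne_AD, ?_⟩
      intro r hr hrect
      rcases mem_Pset.mp hr with rfl | rfl | rfl | rfl | rfl
      · exact Or.inl rfl
      · exact absurd hrect n1
      · exact absurd hrect n2
      · exact Or.inr rfl
      · exact absurd hrect n3
    · refine ⟨pB_mem, pE_mem, ne_BE, ?_⟩
      intro r hr hrect
      rcases mem_Pset.mp hr with rfl | rfl | rfl | rfl | rfl
      · exact absurd hrect n4
      · exact Or.inl rfl
      · exact absurd hrect n5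
      · exact absurd hrect n6
      · exact Or.inr rfl
  · by_cases hd : pD ∈ RectRot θ pC pE
    · exfalso
      rw [mem_RectRot_iff] at hd
      simp only [pC, pD, pE, rotX_pt, rotY_pt] at hd
      obtain ⟨u, v⟩ := hd
      nlinarith [u, v, hcs]
    · left
      refine ⟨pC_mem, pE_mem, ne_CE, ?_⟩
      intro r hr hrect
      rcases mem_Pset.mp hr with rfl | rfl | rfl | rfl | rfl
      · exfalso
        rw [mem_RectRot_iff] at hrect
        simp only [pA, pC, pE, rotX_pt, rotY_pt] at hrect
        obtain ⟨u, v⟩ := hrect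
        nlinarith [u, v, hcs]
      · exact absurd hrect hb
      · exact Or.inl rfl
      · exact absurd hrect hd
      · exact Or.inr rfl

lemma RectRot_comm (θ : ℝ) (p q : Pt) : RectRot θ p q = RectRot θ q p := by
  unfold RectRot; ext z
  constructor <;> rintro ⟨h1, h2, h3, h4⟩ <;>
    exact ⟨by rwa [min_comm], by rwa [max_comm], by rwa [min_comm], by rwa [max_comm]⟩

lemma adj_comm {θ : ℝ} {a b : Pt} (h : RIGrotAdj θ Pset a b) : RIGrotAdj θ Pset b a := by
  obtain ⟨h1, h2, h3, h4⟩ := h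
  exact ⟨h2, h1, h3.symm, fun r hr hm => (h4 r hr (by rwa [RectRot_comm])).symm⟩


lemma m0_EAD : pE ∈ RectRot 0 pA pD := by
  rw [mem_RectRot_iff]
  simp only [pA, pD, pE, rotX_pt, rotY_pt, Real.cos_zero, Real.sin_zero]
  norm_num


lemma m0_DAB : pD ∈ RectRot 0 pA pB := by
  rw [mem_RectRot_iff]
  simp only [pA, pB, pD, rotX_pt, rotY_pt, Real.cos_zero, Real.sin_zero]
  norm_num


lemma m0_EAC : pE ∈ RectRot 0 pA pC := by
  rw [mem_RectRot_iff]
  simp only [pA, pC, pE, rotX_pt, rotY_pt, Real.cos_zero, Real.sin_zero]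
  norm_num


lemma m0_DBE : pD ∈ RectRot 0 pB pE := by
  rw [mem_RectRot_iff]
  simp only [pB, pE, pD, rotX_pt, rotY_pt, Real.cos_zero, Real.sin_zero]
  norm_num


lemma m0_BCD : pB ∈ RectRot 0 pC pD := by
  rw [mem_RectRot_iff]
  simp only [pC, pD, pB, rotX_pt, rotY_pt, Real.cos_zero, Real.sin_zero]
  norm_num


lemma m4_EAB : pE ∈ RectRot (Real.pi/4) pA pB := by
  rw [mem_RectRot_iff]
  simp only [pA, pB, pE, rotX_pt, rotY_pt, Real.cos_pi_div_four, Real.sin_pi_div_four]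
  constructor <;> nlinarith [Real.sq_sqrt (by norm_num : (0:ℝ) ≤ 2), Real.sqrt_nonneg 2]


lemma m4_EAC : pE ∈ RectRot (Real.pi/4) pA pC := by
  rw [mem_RectRot_iff]
  simp only [pA, pC, pE, rotX_pt, rotY_pt, Real.cos_pi_div_four, Real.sin_pi_div_four]
  constructor <;> nlinarith [Real.sq_sqrt (by norm_num : (0:ℝ) ≤ 2), Real.sqrt_nonneg 2]


lemma m4_BCD : pB ∈ RectRot (Real.pi/4) pC pD := by
  rw [mem_RectRot_iff]
  simp only [pC, pD, pB, rotX_pt, rotY_pt, Real.cos_pi_div_four, Real.sin_pi_div_four]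
  constructor <;> nlinarith [Real.sq_sqrt (by norm_num : (0:ℝ) ≤ 2), Real.sqrt_nonneg 2]


lemma m4_BCE : pB ∈ RectRot (Real.pi/4) pC pE := by
  rw [mem_RectRot_iff]
  simp only [pC, pE, pB, rotX_pt, rotY_pt, Real.cos_pi_div_four, Real.sin_pi_div_four]
  constructor <;> nlinarith [Real.sq_sqrt (by norm_num : (0:ℝ) ≤ 2), Real.sqrt_nonneg 2]


lemma adj_CE0 : RIGrotAdj 0 Pset pC pE := by
  rcases key 0 with h | ⟨h1, _⟩
  · exact h
  · exfalso
    rcases h1.2.2.2 pE pE_mem m0_EAD with h | h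
    · exact ne_AE (h.symm)
    · exact ne_DE (h.symm)

lemma not_adj_CE4 : ¬ RIGrotAdj (Real.pi/4) Pset pC pE := by
  intro h
  rcases h.2.2.2 pB pB_mem m4_BCE with h' | h'
  · exact ne_BC h'
  · exact ne_BE h'

lemma adj_AD4 : RIGrotAdj (Real.pi/4) Pset pA pD := by
  rcases key (Real.pi/4) with h | ⟨h1, h2⟩
  · exact absurd h not_adj_CE4
  · exact h1

lemma adj_BE4 : RIGrotAdj (Real.pi/4) Pset pB pE := by
  rcases key (Real.pi/4) with h | ⟨h1, h2⟩
  · exact absurd h not_adj_CE4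
  · exact h2


lemma iff_Gmid : ∀ a b : Pt, s(a, b) ∈ Gmid ↔ RIGrotAdj (Real.pi/4) Pset a b := by
  intro a b
  constructor
  · intro h
    simp only [Gmid, Finset.mem_insert, Finset.mem_singleton, Sym2.eq_iff] at h
    rcases h with (⟨rfl,rfl⟩|⟨rfl,rfl⟩)|(⟨rfl,rfl⟩|⟨rfl,rfl⟩)|(⟨rfl,rfl⟩|⟨rfl,rfl⟩)|(⟨rfl,rfl⟩|⟨rfl,rfl⟩)|(⟨rfl,rfl⟩|⟨rfl,rfl⟩)|(⟨rfl,rfl⟩|⟨rfl,rfl⟩)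
    · exact adj_AD4
    · exact adj_comm (adj_AD4)
    · exact adj_AE (Real.pi/4)
    · exact adj_comm (adj_AE (Real.pi/4))
    · exact adj_BC (Real.pi/4)
    · exact adj_comm (adj_BC (Real.pi/4))
    · exact adj_BD (Real.pi/4)
    · exact adj_comm (adj_BD (Real.pi/4))
    · exact adj_BE4
    · exact adj_comm (adj_BE4)
    · exact adj_DE (Real.pi/4)
    · exact adj_comm (adj_DE (Real.pi/4))
  · rintro ⟨ha, hb, hne, hblock⟩
    rcases mem_Pset.mp ha with rfl | rfl | rfl | rfl | rfl <;>
      rcases mem_Pset.mp hb with rfl | rfl | rfl | rfl | rfl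
    · exact absurd rfl hne
    · exfalso
      rcases hblock pE pE_mem m4_EAB with h | h
      · exact ne_AE h.symm
      · exact ne_BE h.symm
    · exfalso
      rcases hblock pE pE_mem m4_EAC with h | h
      · exact ne_AE h.symm
      · exact ne_CE h.symm
    · simp [Gmid]
    · simp [Gmid]
    · exfalso
      rcases hblock pE pE_mem (by rw [RectRot_comm]; exact m4_EAB) with h | h
      · exact ne_BE h.symm
      · exact ne_AE h.symm
    · exact absurd rfl hne
    · simp [Gmid]
    · simp [Gmid]
    · simp [Gmid]
    · exfalso
      rcases hblock pE pE_mem (by rw [RectRot_comm]; exact m4_EAC) with h | h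
      · exact ne_CE h.symm
      · exact ne_AE h.symm
    · rw [Sym2.eq_swap]; simp [Gmid]
    · exact absurd rfl hne
    · exfalso
      rcases hblock pB pB_mem m4_BCD with h | h
      · exact ne_BC h
      · exact ne_BD h
    · exfalso
      rcases hblock pB pB_mem m4_BCE with h | h
      · exact ne_BC h
      · exact ne_BE h
    · rw [Sym2.eq_swap]; simp [Gmid]
    · rw [Sym2.eq_swap]; simp [Gmid]
    · exfalso
      rcases hblock pB pB_mem (by rw [RectRot_comm]; exact m4_BCD) with h | h
      · exact ne_BD h
      · exact ne_BC h
    · exact absurd rfl hne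
    · simp [Gmid]
    · rw [Sym2.eq_swap]; simp [Gmid]
    · rw [Sym2.eq_swap]; simp [Gmid]
    · exfalso
      rcases hblock pB pB_mem (by rw [RectRot_comm]; exact m4_BCE) with h | h
      · exact ne_BE h
      · exact ne_BC h
    · rw [Sym2.eq_swap]; simp [Gmid]
    · exact absurd rfl hne


lemma iff_G0 : ∀ a b : Pt, s(a, b) ∈ G0 ↔ RIGrotAdj 0 Pset a b := by
  intro a b
  constructor
  · intro h
    simp only [G0, Finset.mem_insert, Finset.mem_singleton, Sym2.eq_iff] at h
    rcases h with (⟨rfl,rfl⟩|⟨rfl,rfl⟩)|(⟨rfl,rfl⟩|⟨rfl,rfl⟩)|(⟨rfl,rfl⟩|⟨rfl,rfl⟩)|(⟨rfl,rfl⟩|⟨rfl,rfl⟩)|(⟨rfl,rfl⟩|⟨rfl,rfl⟩)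
    · exact adj_AE 0
    · exact adj_comm (adj_AE 0)
    · exact adj_BC 0
    · exact adj_comm (adj_BC 0)
    · exact adj_BD 0
    · exact adj_comm (adj_BD 0)
    · exact adj_CE0
    · exact adj_comm (adj_CE0)
    · exact adj_DE 0
    · exact adj_comm (adj_DE 0)
  · rintro ⟨ha, hb, hne, hblock⟩
    rcases mem_Pset.mp ha with rfl | rfl | rfl | rfl | rfl <;>
      rcases mem_Pset.mp hb with rfl | rfl | rfl | rfl | rfl
    · exact absurd rfl hne
    · exfalso
      rcases hblock pD pD_mem m0_DAB with h | h
      · exact ne_AD h.symm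
      · exact ne_BD h.symm
    · exfalso
      rcases hblock pE pE_mem m0_EAC with h | h
      · exact ne_AE h.symm
      · exact ne_CE h.symm
    · exfalso
      rcases hblock pE pE_mem m0_EAD with h | h
      · exact ne_AE h.symm
      · exact ne_DE h.symm
    · simp [G0]
    · exfalso
      rcases hblock pD pD_mem (by rw [RectRot_comm]; exact m0_DAB) with h | h
      · exact ne_BD h.symm
      · exact ne_AD h.symm
    · exact absurd rfl hne
    · simp [G0]
    · simp [G0]
    · exfalso
      rcases hblock pD pD_mem m0_DBE with h | h
      · exact ne_BD h.symm
      · exact ne_DE h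
    · exfalso
      rcases hblock pE pE_mem (by rw [RectRot_comm]; exact m0_EAC) with h | h
      · exact ne_CE h.symm
      · exact ne_AE h.symm
    · rw [Sym2.eq_swap]; simp [G0]
    · exact absurd rfl hne
    · exfalso
      rcases hblock pB pB_mem m0_BCD with h | h
      · exact ne_BC h
      · exact ne_BD h
    · simp [G0]
    · exfalso
      rcases hblock pE pE_mem (by rw [RectRot_comm]; exact m0_EAD) with h | h
      · exact ne_DE h.symm
      · exact ne_AE h.symm
    · rw [Sym2.eq_swap]; simp [G0]
    · exfalso
      rcases hblock pB pB_mem (by rw [RectRot_comm]; exact m0_BCD) with h | h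
      · exact ne_BD h
      · exact ne_BC h
    · exact absurd rfl hne
    · simp [G0]
    · rw [Sym2.eq_swap]; simp [G0]
    · exfalso
      rcases hblock pD pD_mem (by rw [RectRot_comm]; exact m0_DBE) with h | h
      · exact ne_DE h
      · exact ne_BD h.symm
    · rw [Sym2.eq_swap]; simp [G0]
    · rw [Sym2.eq_swap]; simp [G0]
    · exact absurd rfl hne
lemma subset_of_iff {θ : ℝ} {E : Finset (Sym2 Pt)}
    (hE : ∀ a b : Pt, s(a, b) ∈ E ↔ RIGrotAdj θ Pset a b) :
    G0 ⊆ E ∨ Gmid ⊆ E := by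
  have hae : s(pA, pE) ∈ E := (hE _ _).mpr (adj_AE θ)
  have hbc : s(pB, pC) ∈ E := (hE _ _).mpr (adj_BC θ)
  have hbd : s(pB, pD) ∈ E := (hE _ _).mpr (adj_BD θ)
  have hde : s(pD, pE) ∈ E := (hE _ _).mpr (adj_DE θ)
  rcases key θ with hce | ⟨had, hbe⟩
  · left
    have hce' : s(pC, pE) ∈ E := (hE _ _).mpr hce
    intro e he
    simp only [G0, Finset.mem_insert, Finset.mem_singleton] at he
    rcases he with rfl | rfl | rfl | rfl | rfl <;> assumption
  · right
    have had' : s(pA, pD) ∈ E := (hE _ _).mpr had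
    have hbe' : s(pB, pE) ∈ E := (hE _ _).mpr hbe
    intro e he
    simp only [Gmid, Finset.mem_insert, Finset.mem_singleton] at he
    rcases he with rfl | rfl | rfl | rfl | rfl | rfl <;> assumption

lemma cost_G0_ge : cost Gmid ≤ cost G0 := by
  rw [cost_Gmid, cost_G0]
  nlinarith [Real.sq_sqrt (by norm_num : (0:ℝ) ≤ 2), Real.sq_sqrt (by norm_num : (0:ℝ) ≤ 10),
    Real.sqrt_nonneg 2, Real.sqrt_nonneg 10, sq_nonneg (Real.sqrt 2 - Real.sqrt 10),
    sq_nonneg (Real.sqrt 2 + Real.sqrt 10 - 5)]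

lemma cost_lb {θ : ℝ} {E : Finset (Sym2 Pt)}
    (hE : ∀ a b : Pt, s(a, b) ∈ E ↔ RIGrotAdj θ Pset a b) : cost Gmid ≤ cost E := by
  rcases subset_of_iff hE with h | h
  · exact le_trans cost_G0_ge (cost_mono h)
  · exact cost_mono h

lemma card_lb {θ : ℝ} {E : Finset (Sym2 Pt)}
    (hE : ∀ a b : Pt, s(a, b) ∈ E ↔ RIGrotAdj θ Pset a b) : 5 ≤ E.card := by
  rcases subset_of_iff hE with h | h
  · rw [← card_G0]; exact Finset.card_le_card h
  · have := Finset.card_le_card h; rw [card_Gmid] at this; omega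

lemma eq_G0_of_card_le {θ : ℝ} {E : Finset (Sym2 Pt)}
    (hE : ∀ a b : Pt, s(a, b) ∈ E ↔ RIGrotAdj θ Pset a b) (hcard : E.card ≤ 5) : E = G0 := by
  rcases subset_of_iff hE with h | h
  · exact (Finset.eq_of_subset_of_card_le h (by rw [card_G0]; exact hcard)).symm
  · have := Finset.card_le_card h; rw [card_Gmid] at this; omega
/-- there is a point set for which the minimum-cost uniform 2D-monotone
spanning graph and the one with the fewest edges are different graphs (attained at
different rotations). -/
theorem min_cost_and_min_edges_uniform_graphs_differ :
    ∃ P : Finset Pt,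
      (∃ (θc : ℝ) (Ec : Finset (Sym2 Pt)),
        (∀ a b : Pt, s(a, b) ∈ Ec ↔ RIGrotAdj θc P a b) ∧
        (∀ (θ : ℝ) (E : Finset (Sym2 Pt)),
          (∀ a b : Pt, s(a, b) ∈ E ↔ RIGrotAdj θ P a b) → cost Ec ≤ cost E)) ∧
      (∃ (θe : ℝ) (Ee : Finset (Sym2 Pt)),
        (∀ a b : Pt, s(a, b) ∈ Ee ↔ RIGrotAdj θe P a b) ∧
        (∀ (θ : ℝ) (E : Finset (Sym2 Pt)),
          (∀ a b : Pt, s(a, b) ∈ E ↔ RIGrotAdj θ P a b) → Ee.card ≤ E.card)) ∧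
      (∀ (θc : ℝ) (Ec : Finset (Sym2 Pt)) (θe : ℝ) (Ee : Finset (Sym2 Pt)),
        (∀ a b : Pt, s(a, b) ∈ Ec ↔ RIGrotAdj θc P a b) →
        (∀ (θ : ℝ) (E : Finset (Sym2 Pt)),
          (∀ a b : Pt, s(a, b) ∈ E ↔ RIGrotAdj θ P a b) → cost Ec ≤ cost E) →
        (∀ a b : Pt, s(a, b) ∈ Ee ↔ RIGrotAdj θe P a b) →
        (∀ (θ : ℝ) (E : Finset (Sym2 Pt)),
          (∀ a b : Pt, s(a, b) ∈ E ↔ RIGrotAdj θ P a b) → Ee.card ≤ E.card) →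
        Ec ≠ Ee) := by
  refine ⟨Pset, ⟨Real.pi/4, Gmid, iff_Gmid, fun θ E hE => cost_lb hE⟩,
    ⟨0, G0, iff_G0, fun θ E hE => by rw [card_G0]; exact card_lb hE⟩, ?_⟩
  intro θc Ec θe Ee hEc hEcmin hEe hEemin heq
  have h1 : cost Ec ≤ cost Gmid := hEcmin (Real.pi/4) Gmid iff_Gmid
  have h2 : cost Gmid ≤ cost Ec := cost_lb hEc
  have h3 : Ee.card ≤ 5 := by
    have := hEemin 0 G0 iff_G0; rwa [card_G0] at this
  have h4 : Ee = G0 := eq_G0_of_card_le hEe h3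
  rw [heq, h4] at h1 h2
  rw [cost_Gmid, cost_G0] at h1 h2
  nlinarith [Real.sq_sqrt (by norm_num : (0:ℝ) ≤ 2), Real.sq_sqrt (by norm_num : (0:ℝ) ≤ 10),
    Real.sqrt_nonneg 2, Real.sqrt_nonneg 10, sq_nonneg (Real.sqrt 2 - Real.sqrt 10), h1, h2]

end
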